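/- The family of Poisson algebras {P₃,₄^α : α ∈ ℂ} degenerates to the Poisson algebra P₃,₃: there exist a map f : ℂ∖{0} → ℂ and a family g(t), t ∈ ℂ∖{0}, of invertible linear maps of ℂ³ such that for all x, y ∈ ℂ³, g(t)(μ'_{f(t)}(g(t)⁻¹x, g(t)⁻¹y)) → λ'(x,y) as t → 0 (in the standard topology of ℂ³), where μ'_α denotes the bracket of P₃,₄^α and λ' denotes the bracket of P₃,₃ (all these algebras have zero associative multiplication). -/

import Mathlib

open scoped BigOperators

/-- The bilinear map on `Fin n → ℂ` determined by structure constants `c`. -/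
noncomputable def sb {n : ℕ} (c : Fin n → Fin n → Fin n → ℂ) :
    (Fin n → ℂ) →ₗ[ℂ] (Fin n → ℂ) →ₗ[ℂ] (Fin n → ℂ) :=
  LinearMap.mk₂ ℂ (fun x y k => ∑ a, ∑ b, c a b k * (x a * y b))
    (fun x x' y => by
      funext k
      simp [add_mul, mul_add, Finset.sum_add_distrib])
    (fun r x y => by
      funext k
      simp only [Pi.smul_apply, smul_eq_mul, Finset.mul_sum]
      exact Finset.sum_congr rfl fun a _ => Finset.sum_congr rfl fun b _ => by ring)
    (fun x y y' => by
      funext k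
      simp [mul_add, Finset.sum_add_distrib])
    (fun r x y => by
      funext k
      simp only [Pi.smul_apply, smul_eq_mul, Finset.mul_sum]
      exact Finset.sum_congr rfl fun a _ => Finset.sum_congr rfl fun b _ => by ring)

/-- Structure constants of the bracket of `P₃,₄^α`: `{e₁,e₂}=e₂`, `{e₁,e₃}=α e₃`. -/
def cb4 (α : ℂ) : Fin 3 → Fin 3 → Fin 3 → ℂ :=
  ![![![0,0,0],![0,1,0],![0,0,α]], ![![0,-1,0],![0,0,0],![0,0,0]], ![![0,0,-α],![0,0,0],![0,0,0]]]

/-- Structure constants of the bracket of `P₃,₃`: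
`{e₁,e₂}=e₂`, `{e₁,e₃}=e₂+e₃`. -/
def cb3 : Fin 3 → Fin 3 → Fin 3 → ℂ :=
  ![![![0,0,0],![0,1,0],![0,1,1]], ![![0,-1,0],![0,0,0],![0,0,0]], ![![0,-1,-1],![0,0,0],![0,0,0]]]

noncomputable def gmap (t : ℂ) : (Fin 3 → ℂ) →ₗ[ℂ] (Fin 3 → ℂ) where
  toFun x := ![x 0, x 1 + x 2 / t, x 2]
  map_add' x y := by
    funext i
    fin_cases i <;> simp [Matrix.cons_val_zero, Matrix.cons_val_one] <;> ring
  map_smul' r x := by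
    funext i
    fin_cases i <;> simp <;> ring

noncomputable def ginv (t : ℂ) : (Fin 3 → ℂ) →ₗ[ℂ] (Fin 3 → ℂ) where
  toFun x := ![x 0, x 1 - x 2 / t, x 2]
  map_add' x y := by
    funext i
    fin_cases i <;> simp <;> ring
  map_smul' r x := by
    funext i
    fin_cases i <;> simp <;> ring

noncomputable def gequiv (t : ℂ) : (Fin 3 → ℂ) ≃ₗ[ℂ] (Fin 3 → ℂ) :=
  LinearEquiv.ofLinear (gmap t) (ginv t)
    (by
      apply LinearMap.ext; intro x
      funext i
      fin_cases i <;> simp [gmap, ginv] <;> ring)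
    (by
      apply LinearMap.ext; intro x
      funext i
      fin_cases i <;> simp [gmap, ginv] <;> ring)

lemma sb3 (c : Fin 3 → Fin 3 → Fin 3 → ℂ) (x y : Fin 3 → ℂ) (k : Fin 3) :
    sb c x y k =
      c 0 0 k * (x 0 * y 0) + c 0 1 k * (x 0 * y 1) + c 0 2 k * (x 0 * y 2)
      + (c 1 0 k * (x 1 * y 0) + c 1 1 k * (x 1 * y 1) + c 1 2 k * (x 1 * y 2))
      + (c 2 0 k * (x 2 * y 0) + c 2 1 k * (x 2 * y 1) + c 2 2 k * (x 2 * y 2)) := by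
  simp [sb, Fin.sum_univ_three]

set_option maxHeartbeats 1000000 in
/-- The family of Poisson algebras `{P₃,₄^α : α ∈ ℂ}` degenerates to `P₃,₃`
(all these algebras have zero associative multiplication). -/
theorem stmt19 :
    ∃ (f : ℂ → ℂ) (g : ℂ → ((Fin 3 → ℂ) ≃ₗ[ℂ] (Fin 3 → ℂ))), ∀ x y : Fin 3 → ℂ,
      Filter.Tendsto (fun t : ℂ => g t (sb (cb4 (f t)) ((g t).symm x) ((g t).symm y)))
        (nhdsWithin (0 : ℂ) {(0 : ℂ)}ᶜ) (nhds (sb cb3 x y)) := by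

  refine ⟨fun t => 1 + t, fun t => gequiv t, fun x y => ?_⟩
  have key : ∀ t : ℂ, t ≠ 0 →
      (gequiv t) (sb (cb4 (1 + t)) ((gequiv t).symm x) ((gequiv t).symm y)) =
      ![0, x 0 * y 1 - x 1 * y 0 + (x 0 * y 2 - x 2 * y 0),
        (1 + t) * (x 0 * y 2 - x 2 * y 0)] := by
    intro t ht
    have hG : ∀ w : Fin 3 → ℂ, (gequiv t) w = ![w 0, w 1 + w 2 / t, w 2] := fun w => rfl
    have hGs : ∀ w : Fin 3 → ℂ, (gequiv t).symm w = ![w 0, w 1 - w 2 / t, w 2] :=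
      fun w => rfl
    rw [hG, hGs, hGs]
    funext k
    fin_cases k <;>
      · simp only [Matrix.cons_val_zero, Matrix.cons_val_one, Matrix.head_cons,
          Matrix.cons_val_two, Matrix.tail_cons, Fin.isValue, sb3]
        norm_num [cb4, Matrix.vecHead, Matrix.vecTail, Matrix.cons_val_two, Matrix.tail_cons, Matrix.head_cons]
        try field_simp
        try ring
  have htarget : sb cb3 x y =
      ![0, x 0 * y 1 - x 1 * y 0 + (x 0 * y 2 - x 2 * y 0),
        x 0 * y 2 - x 2 * y 0] := by
    funext k
    fin_cases k <;>
      · simp only [sb3]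
        norm_num [cb3, Matrix.vecHead, Matrix.vecTail, Matrix.cons_val_two, Matrix.tail_cons, Matrix.head_cons]
        try ring
  rw [htarget]
  apply Filter.Tendsto.congr' (Filter.eventuallyEq_of_mem self_mem_nhdsWithin
    (fun t ht => (key t ht).symm))
  have : Filter.Tendsto (fun t : ℂ =>
      (![0, x 0 * y 1 - x 1 * y 0 + (x 0 * y 2 - x 2 * y 0),
        (1 + t) * (x 0 * y 2 - x 2 * y 0)] : Fin 3 → ℂ)) (nhds 0)
      (nhds ![0, x 0 * y 1 - x 1 * y 0 + (x 0 * y 2 - x 2 * y 0),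
        x 0 * y 2 - x 2 * y 0]) := by
    rw [tendsto_pi_nhds]
    intro k
    fin_cases k
    · simpa using tendsto_const_nhds
    · simpa using tendsto_const_nhds
    · have : Continuous fun t : ℂ => (1 + t) * (x 0 * y 2 - x 2 * y 0) := by continuity
      simpa using this.tendsto 0
  exact this.mono_left nhdsWithin_le_nhds
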